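/- Consider M = ℝ × ℝ × ℂ with coordinates (ϑ, ξ, u), and for each point (ϑ, ξ, u) ∈ M the symmetric bilinear form g_{(ϑ,ξ,u)} on ℝ × ℝ × ℂ defined by g_{(ϑ,ξ,u)}((a, b, z), (a', b', z')) = a·a' + e^{−ϑ}·b·b' + e^{ϑ}·Re(z·conj(z')). For c, p ∈ ℝ and w, q ∈ ℂ with |w| = 1, define F : M → M by F(ϑ, ξ, u) = (ϑ + 2c, e^{c}·ξ + p, e^{−c}·w·u + q), and let L : ℝ × ℝ × ℂ → ℝ × ℝ × ℂ be the ℝ-linear map L(a, b, z) = (a, e^{c}·b, e^{−c}·w·z). Then F is differentiable with derivative equal to L at every point of M, and for every x ∈ M and all v, v' ∈ ℝ × ℝ × ℂ, g_{F(x)}(L v, L v') = g_{x}(v, v'); that is, F preserves the EPS metric tensor g. -/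

import Mathlib

/-- On `M = ℝ × ℝ × ℂ` with the EPS metric tensor
`g_{(ϑ,ξ,u)}((a,b,z),(a',b',z')) = a·a' + e^{−ϑ}·b·b' + e^{ϑ}·Re(z·conj z')`,
the map `F(ϑ,ξ,u) = (ϑ + 2c, e^c ξ + p, e^{−c} w u + q)` (with `|w| = 1`) has at every
point the derivative `L(a,b,z) = (a, e^c b, e^{−c} w z)`, and `L` takes `g` at `F(x)`
back to `g` at `x`; that is, `F` is an isometry of the EPS metric. -/
theorem eps_maps_are_isometries (c p : ℝ) (w q : ℂ) (hw : ‖w‖ = 1)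
    (F : ℝ × ℝ × ℂ → ℝ × ℝ × ℂ)
    (hF : ∀ (ϑ ξ : ℝ) (u : ℂ),
      F (ϑ, ξ, u) = (ϑ + 2 * c, Real.exp c * ξ + p, (Real.exp (-c) : ℂ) * w * u + q))
    (L : ℝ × ℝ × ℂ →L[ℝ] ℝ × ℝ × ℂ)
    (hL : ∀ (a b : ℝ) (z : ℂ),
      L (a, b, z) = (a, Real.exp c * b, (Real.exp (-c) : ℂ) * w * z))
    (g : ℝ × ℝ × ℂ → (ℝ × ℝ × ℂ) → (ℝ × ℝ × ℂ) → ℝ)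
    (hg : ∀ x v v' : ℝ × ℝ × ℂ,
      g x v v' = v.1 * v'.1 + Real.exp (-x.1) * v.2.1 * v'.2.1
        + Real.exp x.1 * (v.2.2 * (starRingEnd ℂ) v'.2.2).re) :
    (∀ x : ℝ × ℝ × ℂ, HasFDerivAt F L x) ∧
    (∀ (x : ℝ × ℝ × ℂ) (v v' : ℝ × ℝ × ℂ), g (F x) (L v) (L v') = g x v v') := by
  have hnsq : Complex.normSq w = 1 := by
    have := Complex.sq_norm w
    rw [hw] at this; simpa using this.symm
  have hwc : w * (starRingEnd ℂ) w = 1 := by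
    rw [Complex.mul_conj, hnsq, Complex.ofReal_one]
  have hFeq : F = fun x => L x + ((2 * c, p, q) : ℝ × ℝ × ℂ) := by
    funext x
    obtain ⟨a, b, z⟩ := x
    rw [hF, hL]
    simp [Prod.ext_iff]
  constructor
  · intro x
    rw [hFeq]
    exact (L.hasFDerivAt).add_const _
  · intro x v v'
    obtain ⟨a, b, z⟩ := x
    obtain ⟨va, vb, vz⟩ := v
    obtain ⟨va', vb', vz'⟩ := v'
    rw [hg, hg, hF, hL, hL]
    simp only [map_mul]
    have key : ((Real.exp (-c) : ℂ) * w * vz * ((starRingEnd ℂ) (Real.exp (-c) : ℂ)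
        * (starRingEnd ℂ) w * (starRingEnd ℂ) vz')).re
        = Real.exp (-c) ^ 2 * (vz * (starRingEnd ℂ) vz').re := by
      have : (Real.exp (-c) : ℂ) * w * vz * ((starRingEnd ℂ) (Real.exp (-c) : ℂ)
          * (starRingEnd ℂ) w * (starRingEnd ℂ) vz')
          = ((Real.exp (-c) ^ 2 : ℝ) : ℂ) * (vz * (starRingEnd ℂ) vz') := by
        rw [Complex.conj_ofReal, Complex.ofReal_pow]
        calc (Real.exp (-c) : ℂ) * w * vz * ((Real.exp (-c) : ℂ) * (starRingEnd ℂ) w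
              * (starRingEnd ℂ) vz')
            = (Real.exp (-c) : ℂ) * (Real.exp (-c) : ℂ) * (w * (starRingEnd ℂ) w)
              * (vz * (starRingEnd ℂ) vz') := by ring
          _ = (Real.exp (-c) : ℂ) ^ 2 * (vz * (starRingEnd ℂ) vz') := by rw [hwc]; ring
      rw [this, Complex.re_ofReal_mul]
    rw [key]
    rw [show (-(a + 2 * c)) = (-a) + (-c) + (-c) by ring, Real.exp_add, Real.exp_add,
      show a + 2 * c = a + c + c by ring, Real.exp_add, Real.exp_add]
    have h1 : Real.exp (-c) * Real.exp c = 1 := by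
      rw [← Real.exp_add]; simp
    linear_combination (Real.exp (-c) * Real.exp c + 1) *
      (Real.exp (-a) * vb * vb' + Real.exp a * (vz * (starRingEnd ℂ) vz').re) * h1
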